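/- Let D be a degree on the ordinal S. Whenever C_1(a,b) is defined, C_1(a,b) ≤ b + a. Moreover, if in addition a ≤ ε, where ε is the least ordinal x > b with ω^x = x (the least fixpoint of exponentiation base ω above b), then C_1(a,b) = b + a. -/

import Mathlib

open Ordinal Set

noncomputable section

/-- The set of limit points of a set `X` of ordinals: the limit ordinals `c` such that
`X ∩ c` is unbounded in `c`. -/
def limPts (X : Set Ordinal) : Set Ordinal :=
  {c | Order.IsSuccLimit c ∧ ∀ b < c, ∃ x ∈ X, b < x ∧ x < c}

/-- `D` is a degree on the ordinal `S`.  For `c, a < S`, `D c a` reads "`c` has degree `a`". -/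
structure IsDegree (S : Ordinal) (D : Ordinal → Ordinal → Prop) : Prop where
  /-- every `c < S` has degree `0` -/
  deg_zero : ∀ c < S, D c 0
  /-- `0` only has degree `0` -/
  zero_only : ∀ a < S, D 0 a → a = 0
  /-- for a limit `a`, `c` has degree `a` iff it has every degree less than `a` -/
  limit : ∀ a < S, Order.IsSuccLimit a → ∀ c < S, (D c a ↔ ∀ b < a, D c b)
  /-- the successor condition -/
  succ : ∀ a, a + 1 < S →
      {c | c < S ∧ D c (a + 1)} = limPts {c | c < S ∧ D c a} ∩ {c | c < S} ∨
      ∃ d ≤ a, d < S ∧ Order.IsSuccLimit d ∧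
        {c | c < S ∧ D c (a + 1)} =
          (limPts {c | c < S ∧ D c a} ∪ {c | (c < S ∧ D c a) ∧ c ≤ d}) ∩ {c | c < S}

/-- The set of candidate values for the collapsing function `C(a,b)`: ordinals `c < S`
above `b` having some degree `a' ≥ a`. -/
def CSet (S : Ordinal) (D : Ordinal → Ordinal → Prop) (a b : Ordinal) : Set Ordinal :=
  {c | c < S ∧ b < c ∧ ∃ a', a ≤ a' ∧ a' < S ∧ D c a'}

/-- `C(a,b)` is defined iff some candidate value exists. -/
def CDefined (S : Ordinal) (D : Ordinal → Ordinal → Prop) (a b : Ordinal) : Prop :=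
  (CSet S D a b).Nonempty

/-- The collapsing function `C(a,b)`: the least element of `CSet S D a b`
(meaningful when `CDefined S D a b`). -/
def Cval (S : Ordinal) (D : Ordinal → Ordinal → Prop) (a b : Ordinal) : Ordinal :=
  sInf (CSet S D a b)

/-- `a` is maximal in `C(a,b)`: `C(a,b)` is defined and has no degree strictly greater
than `a`. -/
def CMaximal (S : Ordinal) (D : Ordinal → Ordinal → Prop) (a b : Ordinal) : Prop :=
  CDefined S D a b ∧ ∀ a', a < a' → a' < S → ¬ D (Cval S D a b) a'

/-- `b` is minimal in `C(a,b)`: `C(a,b)` is defined and `C(a,b') < C(a,b)` for every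
`b' < b`. -/
def CMinimal (S : Ordinal) (D : Ordinal → Ordinal → Prop) (a b : Ordinal) : Prop :=
  CDefined S D a b ∧ ∀ b' < b, Cval S D a b' < Cval S D a b

end

/-- The graph of the one-variable collapsing function: `C1Rel S D a b v` means that
`C₁(a, b)` is defined and equal to `v`.  It is defined by recursion on `a`: for `a > 0`
write `a = ω ^ e + d` where `ω ^ e` is the leading term of the Cantor normal form of `a`
(so `e = log ω a` and `d < a`); if `e` is maximal in `C(e, b)` then
`C₁(a, b) = C₁(d, C(e, b))`, and if `C(e, b)` is defined but `e` is not maximal in it,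
then `C₁(a, b) = C(e, b)`. -/
inductive C1Rel (S : Ordinal) (D : Ordinal → Ordinal → Prop) :
    Ordinal → Ordinal → Ordinal → Prop
  | zero (b : Ordinal) : C1Rel S D 0 b b
  | max_step (a b e d v : Ordinal) : a ≠ 0 → e = Ordinal.log omega0 a →
      a = omega0 ^ e + d → CMaximal S D e b → C1Rel S D d (Cval S D e b) v →
      C1Rel S D a b v
  | nonmax_step (a b e d : Ordinal) : a ≠ 0 → e = Ordinal.log omega0 a →
      a = omega0 ^ e + d → CDefined S D e b → ¬ CMaximal S D e b →
      C1Rel S D a b (Cval S D e b)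

open Ordinal Set

section Aux

lemma omega0_opow_pos (e : Ordinal) : 0 < omega0 ^ e := opow_pos e omega0_pos

lemma add_opow_eq (b e : Ordinal) :
    b + omega0 ^ e = omega0 ^ e * (b / omega0 ^ e + 1) := by
  have h := Ordinal.div_add_mod b (omega0 ^ e)
  have hm : b % omega0 ^ e < omega0 ^ e := Ordinal.mod_lt b (omega0_opow_pos e).ne'
  rw [mul_add, mul_one]
  conv_lhs => rw [← h]
  rw [add_assoc, Ordinal.add_absorp hm le_rfl]

lemma dvd_add_opow (b e : Ordinal) : omega0 ^ e ∣ b + omega0 ^ e :=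
  ⟨_, add_opow_eq b e⟩

lemma lt_add_opow (b e : Ordinal) : b < b + omega0 ^ e := by
  calc b = b + 0 := (add_zero b).symm
    _ < b + omega0 ^ e := add_lt_add_right (omega0_opow_pos e) b

lemma add_opow_le {b c e : Ordinal} (hdvd : omega0 ^ e ∣ c) (hbc : b < c) :
    b + omega0 ^ e ≤ c := by
  obtain ⟨k, rfl⟩ := hdvd
  rw [add_opow_eq]
  apply mul_le_mul_right
  rw [Ordinal.add_one_eq_succ, Order.succ_le_iff]
  by_contra hle
  push_neg at hle
  have h1 : omega0 ^ e * k ≤ omega0 ^ e * (b / omega0 ^ e) := mul_le_mul_right hle _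
  have h2 : omega0 ^ e * (b / omega0 ^ e) ≤ b := by
    conv_rhs => rw [← Ordinal.div_add_mod b (omega0 ^ e)]
    exact le_self_add
  exact absurd hbc (not_lt.2 (h1.trans h2))

lemma add_opow_lt {b c e : Ordinal} (hdvd : omega0 ^ (e + 1) ∣ c) (hbc : b < c) :
    b + omega0 ^ e < c := by
  have h1 : omega0 ^ e ∣ c := (opow_dvd_opow omega0 le_self_add).trans hdvd
  rcases lt_or_eq_of_le (add_opow_le h1 hbc) with h | h
  · exact h
  · exfalso
    obtain ⟨k, hk⟩ := hdvd
    have hk0 : k ≠ 0 := by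
      rintro rfl
      rw [mul_zero] at hk
      exact absurd hbc (by simp [hk])
    have hc1 : c = omega0 ^ e * (omega0 * k) := by
      rw [hk, Ordinal.add_one_eq_succ, opow_succ, mul_assoc]
    have hc2 : c = omega0 ^ e * (b / omega0 ^ e + 1) := by rw [← h, add_opow_eq]
    have heq : b / omega0 ^ e + 1 = omega0 * k := by
      have e1 : c / omega0 ^ e = omega0 * k := by
        rw [hc1, Ordinal.mul_div_cancel _ (omega0_opow_pos e).ne']
      have e2 : c / omega0 ^ e = b / omega0 ^ e + 1 := by
        rw [hc2, Ordinal.mul_div_cancel _ (omega0_opow_pos e).ne']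
      rw [← e2, e1]
    have hlim : Order.IsSuccLimit (omega0 * k) :=
      isSuccLimit_mul_left isSuccLimit_omega0 (pos_iff_ne_zero.2 hk0)
    rw [← heq, Ordinal.add_one_eq_succ] at hlim
    exact Order.not_isSuccLimit_succ _ hlim

end Aux

section Deg

variable {S : Ordinal} {D : Ordinal → Ordinal → Prop}

/-- Lemma A: every nonzero multiple of `ω^a` below `S` has degree `a`. -/
lemma deg_of_dvd (hD : IsDegree S D) :
    ∀ a, a < S → ∀ c, c < S → c ≠ 0 → omega0 ^ a ∣ c → D c a := by
  intro a
  induction a using Ordinal.limitRecOn with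
  | zero =>
    intro _ c hcS _ _
    exact hD.deg_zero c hcS
  | add_one a IH =>
    intro haS c hcS hc0 hdvd
    have haS' : a < S := lt_of_lt_of_le (lt_add_one a) haS.le
    -- `c` is a limit point of the degree-`a` elements
    have hωdvd : omega0 ∣ c := by
      have h1 : omega0 ^ (1 : Ordinal) ∣ omega0 ^ (a + 1) :=
        opow_dvd_opow omega0 (by simpa using add_le_add_left (zero_le a) 1)
      rw [opow_one] at h1
      exact h1.trans hdvd
    have hclim : Order.IsSuccLimit c := Ordinal.isSuccLimit_iff_omega0_dvd.2 ⟨hc0, hωdvd⟩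
    have hlp : c ∈ limPts {x | x < S ∧ D x a} := by
      refine ⟨hclim, fun b hb => ?_⟩
      refine ⟨b + omega0 ^ a, ⟨?_, ?_⟩, lt_add_opow b a, add_opow_lt hdvd hb⟩
      · exact lt_trans (add_opow_lt hdvd hb) hcS
      · exact IH haS' (b + omega0 ^ a) (lt_trans (add_opow_lt hdvd hb) hcS)
          (lt_of_le_of_lt (zero_le (a := b)) (lt_add_opow b a)).ne' (dvd_add_opow b a)
    have hmem : c ∈ limPts {x | x < S ∧ D x a} ∩ {x | x < S} := ⟨hlp, hcS⟩
    rcases hD.succ a haS with hset | ⟨d, _, _, _, hset⟩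
    · have : c ∈ {c | c < S ∧ D c (a + 1)} := by rw [hset]; exact hmem
      exact this.2
    · have : c ∈ {c | c < S ∧ D c (a + 1)} := by
        rw [hset]; exact ⟨Or.inl hlp, hcS⟩
      exact this.2
  | limit a hlim IH =>
    intro haS c hcS hc0 hdvd
    refine (hD.limit a haS hlim c hcS).2 fun b hb => ?_
    exact IH b hb (hb.trans haS) c hcS hc0 ((opow_dvd_opow _ hb.le).trans hdvd)

/-- If `c > ω^a` is a limit of elements that are each either multiples of `ω^a` or `≤ a`,
then `ω^(a+1) ∣ c`. -/
lemma limpt_mul_omega0 {P : Ordinal → Prop} {a c : Ordinal}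
    (hwit : ∀ b < c, ∃ x, P x ∧ b < x ∧ x < c)
    (hmult : ∀ x, P x → x ≠ 0 → omega0 ^ a ∣ x ∨ x ≤ a)
    (hac : omega0 ^ a < c) : omega0 ^ (a + 1) ∣ c := by
  have hG : ∀ w, 1 ≤ w → omega0 ^ a * w < c → c ≤ omega0 ^ a * (w + 1) → False := by
    intro w hw1 hwc hcw
    obtain ⟨x, hxP, hmx, hxc⟩ := hwit (omega0 ^ a * w) hwc
    have hxa : omega0 ^ a ≤ omega0 ^ a * w := by
      simpa using mul_le_mul_right hw1 (omega0 ^ a)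
    have hx0 : x ≠ 0 :=
      (lt_of_lt_of_le (omega0_opow_pos a) (hxa.trans hmx.le)).ne'
    rcases hmult x hxP hx0 with ⟨u, rfl⟩ | hxle
    · have h1 : w < u := (mul_lt_mul_iff_right₀ (omega0_opow_pos a)).1 hmx
      have h2 : u < w + 1 :=
        (mul_lt_mul_iff_right₀ (omega0_opow_pos a)).1 (lt_of_lt_of_le hxc hcw)
      rw [Ordinal.add_one_eq_succ, Order.lt_succ_iff] at h2
      exact absurd h1 (not_lt.2 h2)
    · have : a < x :=
        lt_of_le_of_lt ((right_le_opow a one_lt_omega0).trans hxa) hmx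
      exact absurd hxle (not_le.2 this)
  set u := c / omega0 ^ a with hu
  set t := c % omega0 ^ a with ht
  have hct : c = omega0 ^ a * u + t := (Ordinal.div_add_mod c (omega0 ^ a)).symm
  have htlt : t < omega0 ^ a := Ordinal.mod_lt c (omega0_opow_pos a).ne'
  have hu1 : 1 ≤ u := by
    by_contra hu0
    push_neg at hu0
    rw [Ordinal.lt_one_iff_zero] at hu0
    rw [hu0, mul_zero, zero_add] at hct
    exact absurd hac (not_lt.2 (hct ▸ htlt.le))
  have ht0 : t = 0 := by
    by_contra ht0
    refine hG u hu1 ?_ ?_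
    · calc omega0 ^ a * u = omega0 ^ a * u + 0 := (add_zero _).symm
        _ < omega0 ^ a * u + t :=
          add_lt_add_right (pos_iff_ne_zero.2 ht0) _
        _ = c := hct.symm
    · rw [mul_add, mul_one, hct]
      exact add_le_add_right htlt.le _
  rw [ht0, add_zero] at hct
  rcases Ordinal.zero_or_succ_or_isSuccLimit u with hu0 | ⟨w, hw⟩ | hulim
  · rw [hu0] at hu1
    exact absurd hu1 (by simp)
  · exfalso
    rw [← Ordinal.add_one_eq_succ, eq_comm] at hw
    have hw1 : 1 ≤ w := by
      by_contra hw0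
      push_neg at hw0
      rw [Ordinal.lt_one_iff_zero] at hw0
      rw [hw0, zero_add] at hw
      rw [hw, mul_one] at hct
      exact absurd (hct ▸ hac) (lt_irrefl _)
    refine hG w hw1 ?_ (by rw [hct, hw])
    rw [hct, hw]
    exact (mul_lt_mul_iff_right₀ (omega0_opow_pos a)).2 (lt_add_one w)
  · obtain ⟨k, hk⟩ := (Ordinal.isSuccLimit_iff_omega0_dvd.1 hulim).2
    refine ⟨k, ?_⟩
    rw [hct, hk, Ordinal.add_one_eq_succ, opow_succ, mul_assoc]

/-- Lemma C'': any nonzero `c < S` of degree `a` is a multiple of `ω^a`, or is an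
epsilon number `≤ a`. -/
lemma dvd_or_eps (hD : IsDegree S D) :
    ∀ a, a < S → ∀ c, c < S → c ≠ 0 → D c a →
      omega0 ^ a ∣ c ∨ (omega0 ^ c = c ∧ c ≤ a) := by
  intro a
  induction a using Ordinal.limitRecOn with
  | zero =>
    intro _ c _ _ _
    left; simp
  | add_one a IH =>
    intro haS c hcS hc0 hcD
    have haS' : a < S := lt_of_lt_of_le (lt_add_one a) haS.le
    have main : c ∈ limPts {x | x < S ∧ D x a} →
        omega0 ^ (a + 1) ∣ c ∨ (omega0 ^ c = c ∧ c ≤ a + 1) := by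
      rintro ⟨hclim, hwit⟩
      rcases lt_or_ge (omega0 ^ a) c with hac | hca
      · left
        refine limpt_mul_omega0 hwit ?_ hac
        intro x hxP hx0
        rcases IH haS' x hxP.1 hx0 hxP.2 with h | h
        exacts [Or.inl h, Or.inr h.2]
      · right
        have hwit' : ∀ b < c, ∃ x, (omega0 ^ x = x ∧ x ≤ a) ∧ b < x ∧ x < c := by
          intro b hb
          obtain ⟨x, ⟨hxS, hxD⟩, hbx, hxc⟩ := hwit b hb
          have hx0 : x ≠ 0 := (lt_of_le_of_lt (zero_le (a := b)) hbx).ne'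
          rcases IH haS' x hxS hx0 hxD with hdvd | h
          · exact absurd (Ordinal.le_of_dvd hx0 hdvd)
              (not_le.2 (lt_of_lt_of_le hxc hca))
          · exact ⟨x, h, hbx, hxc⟩
        have hlea : c ≤ a := by
          by_contra hlt
          push_neg at hlt
          obtain ⟨x, ⟨_, hxa⟩, hax, _⟩ := hwit' a hlt
          exact absurd hxa (not_le.2 hax)
        refine ⟨le_antisymm ?_ (right_le_opow c one_lt_omega0),
          hlea.trans le_self_add⟩
        refine (opow_le_of_isSuccLimit omega0_ne_zero hclim).2 fun b hb => ?_
        obtain ⟨x, ⟨hx, _⟩, hbx, hxc⟩ := hwit' b hb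
        calc omega0 ^ b ≤ omega0 ^ x := opow_le_opow_right omega0_pos hbx.le
          _ = x := hx
          _ ≤ c := hxc.le
    have hmem : c ∈ {c | c < S ∧ D c (a + 1)} := ⟨hcS, hcD⟩
    rcases hD.succ a haS with hset | ⟨d, hda, _, _, hset⟩
    · rw [hset] at hmem
      exact main hmem.1
    · rw [hset] at hmem
      rcases hmem.1 with hlp | ⟨⟨_, hcDa⟩, hcd⟩
      · exact main hlp
      · rcases IH haS' c hcS hc0 hcDa with hdvd | ⟨heps, hle⟩
        · have h1 : omega0 ^ a ≤ c := Ordinal.le_of_dvd hc0 hdvd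
          have h2 : c ≤ a := hcd.trans hda
          have h3 : a ≤ omega0 ^ a := right_le_opow a one_lt_omega0
          have hca : c = a := le_antisymm h2 (h3.trans h1)
          right
          refine ⟨?_, h2.trans le_self_add⟩
          rw [hca]
          exact le_antisymm (hca ▸ h1) h3
        · right
          exact ⟨heps, hle.trans le_self_add⟩
  | limit a halim IH =>
    intro haS c hcS hc0 hcD
    have hall : ∀ b' < a, D c b' := (hD.limit a haS halim c hcS).1 hcD
    by_cases hdall : ∀ b' < a, omega0 ^ b' ∣ c
    · left
      have hr : c % omega0 ^ a = 0 := by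
        by_contra hr0
        have hrlt : c % omega0 ^ a < omega0 ^ a := Ordinal.mod_lt c (omega0_opow_pos a).ne'
        obtain ⟨b', hb', hrb⟩ := (Ordinal.lt_opow_of_isSuccLimit omega0_ne_zero halim).1 hrlt
        obtain ⟨m, hm⟩ := hdall b' hb'
        obtain ⟨w, hw⟩ : omega0 ^ b' ∣ omega0 ^ a * (c / omega0 ^ a) :=
          (opow_dvd_opow omega0 hb'.le).mul_right _
        have hsum : omega0 ^ b' * w + c % omega0 ^ a = omega0 ^ b' * m := by
          rw [← hw, ← hm]
          exact Ordinal.div_add_mod c (omega0 ^ a)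
        have hwm : w ≤ m := by
          by_contra hmw
          push_neg at hmw
          have h1 : omega0 ^ b' * m < omega0 ^ b' * w :=
            (mul_lt_mul_iff_right₀ (omega0_opow_pos b')).2 hmw
          have h2 : omega0 ^ b' * w ≤ omega0 ^ b' * m := by
            rw [← hsum]; exact le_self_add
          exact absurd h1 (not_lt.2 h2)
        have hrm : c % omega0 ^ a = omega0 ^ b' * (m - w) := by
          have h1 : omega0 ^ b' * m = omega0 ^ b' * w + omega0 ^ b' * (m - w) := by
            rw [← mul_add, Ordinal.add_sub_cancel_of_le hwm]
          rw [h1] at hsum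
          exact add_left_cancel_iff.1 hsum
        have : omega0 ^ b' ≤ c % omega0 ^ a :=
          Ordinal.le_of_dvd hr0 ⟨m - w, hrm⟩
        exact absurd hrb (not_lt.2 this)
      refine ⟨c / omega0 ^ a, ?_⟩
      conv_lhs => rw [← Ordinal.div_add_mod c (omega0 ^ a)]
      rw [hr, add_zero]
    · push_neg at hdall
      obtain ⟨b', hb'a, hnd⟩ := hdall
      rcases IH b' hb'a (hb'a.trans haS) c hcS hc0 (hall b' hb'a) with h | h
      · exact absurd h hnd
      · right
        exact ⟨h.1, h.2.trans hb'a.le⟩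

end Deg

section Cv

variable {S : Ordinal} {D : Ordinal → Ordinal → Prop}

lemma cdef_lt {e b : Ordinal} (h : CDefined S D e b) : e < S := by
  obtain ⟨c, _, _, a', hea', ha'S, _⟩ := h
  exact lt_of_le_of_lt hea' ha'S

lemma cval_mem {e b : Ordinal} (h : CDefined S D e b) :
    Cval S D e b ∈ CSet S D e b := csInf_mem h

lemma cval_le (hD : IsDegree S D) {e b : Ordinal} (h : CDefined S D e b) :
    Cval S D e b ≤ b + omega0 ^ e := by
  have heS := cdef_lt h
  have hmem := cval_mem h
  rcases lt_or_ge (b + omega0 ^ e) S with hbS | hbS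
  · refine csInf_le' ⟨hbS, lt_add_opow b e, e, le_rfl, heS, ?_⟩
    exact deg_of_dvd hD e heS _ hbS
      (lt_of_le_of_lt (zero_le (a := b)) (lt_add_opow b e)).ne' (dvd_add_opow b e)
  · exact hmem.1.le.trans hbS

lemma epsSet_nonempty (b : Ordinal) :
    {x : Ordinal | b < x ∧ omega0 ^ x = x}.Nonempty := by
  refine ⟨nfp (omega0 ^ ·) (b + 1), ?_, ?_⟩
  · exact lt_of_lt_of_le (lt_add_one b) (le_nfp _ _)
  · exact Ordinal.nfp_fp (isNormal_opow one_lt_omega0) (b + 1)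

lemma eps_mem (b : Ordinal) :
    sInf {x : Ordinal | b < x ∧ omega0 ^ x = x} ∈ {x : Ordinal | b < x ∧ omega0 ^ x = x} :=
  csInf_mem (epsSet_nonempty b)

lemma add_opow_le_eps {b e : Ordinal}
    (he : e ≤ sInf {x : Ordinal | b < x ∧ omega0 ^ x = x}) :
    b + omega0 ^ e ≤ sInf {x : Ordinal | b < x ∧ omega0 ^ x = x} := by
  obtain ⟨hbε, hεfix⟩ := eps_mem b
  rcases lt_or_eq_of_le he with hlt | rfl
  · have h1 : omega0 ^ e < omega0 ^ sInf {x : Ordinal | b < x ∧ omega0 ^ x = x} :=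
      (opow_lt_opow_iff_right one_lt_omega0).2 hlt
    rw [hεfix] at h1
    have h2 := principal_add_omega0_opow (sInf {x : Ordinal | b < x ∧ omega0 ^ x = x})
      (hεfix.symm ▸ hbε) (hεfix.symm ▸ h1)
    rw [hεfix] at h2
    exact h2.le
  · exact le_trans (add_absorp (hεfix.symm ▸ hbε) le_rfl).le hεfix.le

lemma cval_eq (hD : IsDegree S D) {e b : Ordinal} (h : CDefined S D e b)
    (he : e ≤ sInf {x : Ordinal | b < x ∧ omega0 ^ x = x}) :
    Cval S D e b = b + omega0 ^ e := by
  obtain ⟨hcS, hbc, a', hea', ha'S, hDa⟩ := cval_mem h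
  refine le_antisymm (cval_le hD h) ?_
  have hc0 : Cval S D e b ≠ 0 := (lt_of_le_of_lt (zero_le (a := b)) hbc).ne'
  rcases dvd_or_eps hD a' ha'S _ hcS hc0 hDa with hdvd | ⟨heps, _⟩
  · exact add_opow_le ((opow_dvd_opow omega0 hea').trans hdvd) hbc
  · exact (add_opow_le_eps he).trans (csInf_le' ⟨hbc, heps⟩)

end Cv

theorem C1_le_add_and_eq_add (S : Ordinal) (D : Ordinal → Ordinal → Prop)
    (hD : IsDegree S D) (a b v : Ordinal) (h : C1Rel S D a b v) :
    v ≤ b + a ∧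
      (a ≤ sInf {x : Ordinal | b < x ∧ omega0 ^ x = x} → v = b + a) := by
  induction h with
  | zero b => exact ⟨by rw [add_zero], fun _ => by rw [add_zero]⟩
  | max_step a b e d v h0 he had hmax hrec IH =>
    obtain ⟨IH1, IH2⟩ := IH
    have hdef := hmax.1
    have hcle := cval_le hD hdef
    constructor
    · calc v ≤ Cval S D e b + d := IH1
        _ ≤ (b + omega0 ^ e) + d := add_le_add_left hcle d
        _ = b + a := by rw [add_assoc, ← had]
    · intro ha
      have heε : e ≤ sInf {x : Ordinal | b < x ∧ omega0 ^ x = x} := by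
        rw [he]; exact (log_le_self omega0 a).trans ha
      have hcv : Cval S D e b = b + omega0 ^ e := cval_eq hD hdef heε
      have hbc : b < Cval S D e b := (cval_mem hdef).2.1
      have hdε : d ≤ sInf {x : Ordinal | Cval S D e b < x ∧ omega0 ^ x = x} := by
        have h1 : d ≤ a := had ▸ le_add_self
        have h2 : sInf {x : Ordinal | b < x ∧ omega0 ^ x = x} ≤
            sInf {x : Ordinal | Cval S D e b < x ∧ omega0 ^ x = x} := by
          obtain ⟨hm1, hm2⟩ := eps_mem (Cval S D e b)
          exact csInf_le' ⟨lt_trans hbc hm1, hm2⟩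
        exact (h1.trans ha).trans h2
      rw [IH2 hdε, hcv, add_assoc, ← had]
  | nonmax_step a b e d h0 he had hdef hnmax =>
    constructor
    · refine (cval_le hD hdef).trans ?_
      refine add_le_add_right ?_ b
      rw [had]
      exact le_self_add
    · intro ha
      have heε : e ≤ sInf {x : Ordinal | b < x ∧ omega0 ^ x = x} := by
        rw [he]; exact (log_le_self omega0 a).trans ha
      have hcv : Cval S D e b = b + omega0 ^ e := cval_eq hD hdef heε
      obtain ⟨hcS, hbc, _⟩ := cval_mem hdef
      have hc0 : Cval S D e b ≠ 0 := (lt_of_le_of_lt (zero_le (a := b)) hbc).ne'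
      have hex : ¬ ∀ a', e < a' → a' < S → ¬ D (Cval S D e b) a' :=
        fun hall => hnmax ⟨hdef, hall⟩
      push_neg at hex
      obtain ⟨a', hea', ha'S, hDa⟩ := hex
      rcases dvd_or_eps hD a' ha'S _ hcS hc0 hDa with hdvd | ⟨heps, _⟩
      · exfalso
        have h1 : omega0 ^ (e + 1) ∣ Cval S D e b := by
          refine (opow_dvd_opow omega0 ?_).trans hdvd
          rw [Ordinal.add_one_eq_succ, Order.succ_le_iff]
          exact hea'
        have h2 := add_opow_lt h1 hbc
        rw [hcv] at h2
        exact absurd h2 (lt_irrefl _)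
      · have hεle : sInf {x : Ordinal | b < x ∧ omega0 ^ x = x} ≤ Cval S D e b :=
          csInf_le' ⟨hbc, heps⟩
        obtain ⟨hbε, hεfix⟩ := eps_mem b
        rcases lt_or_eq_of_le heε with hlt | heq
        · exfalso
          have h1 : omega0 ^ e < omega0 ^ sInf {x : Ordinal | b < x ∧ omega0 ^ x = x} :=
            (opow_lt_opow_iff_right one_lt_omega0).2 hlt
          rw [hεfix] at h1
          have h2 := principal_add_omega0_opow
            (sInf {x : Ordinal | b < x ∧ omega0 ^ x = x})
            (hεfix.symm ▸ hbε) (hεfix.symm ▸ h1)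
          rw [hεfix] at h2
          rw [hcv] at hεle
          exact absurd h2 (not_lt.2 hεle)
        · have hωe : omega0 ^ e = sInf {x : Ordinal | b < x ∧ omega0 ^ x = x} := by
            rw [heq]; exact hεfix
          have hd0 : d = 0 := by
            have h1 : omega0 ^ e + d ≤ omega0 ^ e + 0 := by
              rw [add_zero, ← had, hωe]
              exact ha
            exact le_antisymm ((add_le_add_iff_left _).1 h1) (zero_le (a := d))
          rw [hcv, had, hd0, add_zero]
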